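/- Fix p > 0. For M > 1/p define I_p(M) := ∫₁^∞ (log(1/(1 - x^{-M})))^p dx. Then I_p(M) is finite, and there exist constants c, C > 0 (depending only on p) such that c/M ≤ I_p(M) ≤ C/M for all M ≥ 2/p. -/

import Mathlib

open MeasureTheory Real Set

private lemma aux_exp {t : ℝ} (h0 : 0 ≤ t) (h1 : t ≤ 1) : t / 3 ≤ 1 - Real.exp (-t) := by
  have h2 := Real.add_one_le_exp t
  have hinv : Real.exp (-t) * Real.exp t = 1 := by rw [← Real.exp_add]; simp
  have h4 : Real.exp (-1) ≤ Real.exp (-t) := Real.exp_le_exp.2 (by linarith)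
  have h5 : Real.exp 1 < 2.7182818286 := Real.exp_one_lt_d9
  have h6 : Real.exp (-1) * Real.exp 1 = 1 := by rw [← Real.exp_add]; simp
  have h7 : (0:ℝ) < Real.exp 1 := Real.exp_pos 1
  nlinarith [Real.exp_pos (-t), Real.exp_pos (-1)]

-- log(1/v) ≤ 2p * v^(-1/(2p)) for 0 < v
private lemma aux_log {p v : ℝ} (hp : 0 < p) (hv : 0 < v) :
    Real.log (1 / v) ≤ 2 * p * v ^ (-(1 / (2 * p)) : ℝ) := by
  have h1 : Real.log (1 / v) = Real.log (v ^ (-(1 / (2 * p)) : ℝ)) * (2 * p) := by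
    rw [Real.log_rpow hv, one_div, Real.log_inv]
    field_simp
  have h2 : Real.log (v ^ (-(1 / (2 * p)) : ℝ)) ≤ v ^ (-(1 / (2 * p)) : ℝ) := by
    have := Real.log_le_sub_one_of_pos (Real.rpow_pos_of_pos hv (-(1 / (2 * p)) : ℝ))
    linarith
  rw [h1]
  nlinarith [Real.rpow_pos_of_pos hv (-(1 / (2 * p)) : ℝ)]

-- basic range facts
private lemma aux_range {M x : ℝ} (hM : 0 < M) (hx : 1 < x) :
    0 < x ^ (-M) ∧ x ^ (-M) < 1 :=
  ⟨Real.rpow_pos_of_pos (by linarith) _, Real.rpow_lt_one_of_one_lt_of_neg hx (by linarith)⟩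

-- global upper bound
private lemma aux_ub_global {p M x : ℝ} (hp : 0 < p) (hM : 0 < M) (hx : 1 < x) :
    (Real.log (1 / (1 - x ^ (-M)))) ^ p ≤ (2 * p) ^ p * (1 - x ^ (-M)) ^ (-(1/2) : ℝ) := by
  obtain ⟨hu0, hu1⟩ := aux_range hM hx
  set v := 1 - x ^ (-M) with hvdef
  have hv : 0 < v := by simp only [hvdef]; linarith
  have hv1 : v ≤ 1 := by simp only [hvdef]; linarith
  have hlognn : 0 ≤ Real.log (1 / v) := Real.log_nonneg ((le_div_iff₀ hv).2 (by linarith))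
  have hlog := aux_log hp hv
  calc (Real.log (1 / v)) ^ p ≤ (2 * p * v ^ (-(1 / (2 * p)) : ℝ)) ^ p :=
        Real.rpow_le_rpow hlognn hlog hp.le
    _ = (2 * p) ^ p * (v ^ (-(1 / (2 * p)) : ℝ)) ^ p := Real.mul_rpow (by positivity) (by positivity)
    _ = (2 * p) ^ p * v ^ (-(1/2) : ℝ) := by
        rw [← Real.rpow_mul hv.le,
          show (-(1 / (2 * p)) * p : ℝ) = (-(1/2) : ℝ) by field_simp]

-- near region: 1 - x^(-M) ≥ M(x-1)/(3 * 2^(1/M))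
private lemma aux_near {M x : ℝ} (hM : 0 < M) (hx : 1 < x) (hxb : x ≤ (2:ℝ) ^ (1/M)) :
    M * (x - 1) / (3 * (2:ℝ) ^ (1/M)) ≤ 1 - x ^ (-M) := by
  have hx0 : (0:ℝ) < x := by linarith
  have hlogx : 0 ≤ Real.log x := Real.log_nonneg hx.le
  have hb0 : (0:ℝ) < (2:ℝ) ^ (1/M) := Real.rpow_pos_of_pos two_pos _
  have hlog2 : M * Real.log x ≤ 1 := by
    have h1 : Real.log x ≤ Real.log ((2:ℝ) ^ (1/M)) := Real.log_le_log hx0 hxb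
    rw [Real.log_rpow two_pos] at h1
    have h2 : Real.log 2 < 0.6931471808 := Real.log_two_lt_d9
    have : M * Real.log x ≤ M * (1/M * Real.log 2) := by
      apply mul_le_mul_of_nonneg_left h1 hM.le
    calc M * Real.log x ≤ M * (1/M * Real.log 2) := this
      _ = Real.log 2 := by field_simp
      _ ≤ 1 := by linarith
  have hexp := aux_exp (by positivity : (0:ℝ) ≤ M * Real.log x) hlog2
  have hxM : x ^ (-M) = Real.exp (-(M * Real.log x)) := by
    rw [Real.rpow_def_of_pos hx0]; ring_nf
  have h2 : (x - 1) / x ≤ Real.log x := by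
    have h := Real.log_le_sub_one_of_pos (show (0:ℝ) < x⁻¹ by positivity)
    rw [Real.log_inv] at h
    have hxx : (x - 1) / x = 1 - x⁻¹ := by field_simp
    rw [hxx]; linarith
  have h3 : (x - 1) / ((2:ℝ) ^ (1/M)) ≤ (x - 1) / x := by
    gcongr
  have key : M * (x - 1) / (3 * (2:ℝ) ^ (1/M)) ≤ M * Real.log x / 3 := by
    calc M * (x - 1) / (3 * (2:ℝ) ^ (1/M)) = (M/3) * ((x - 1) / ((2:ℝ) ^ (1/M))) := by ring
      _ ≤ (M/3) * Real.log x := by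
          apply mul_le_mul_of_nonneg_left (h3.trans h2) (by positivity)
      _ = M * Real.log x / 3 := by ring
  rw [hxM]
  linarith

-- tail: for x ≥ 2^(1/M), integrand ≤ 2^p * x^(-(M*p))
private lemma aux_tail {p M x : ℝ} (hp : 0 < p) (hM : 0 < M) (hxb : (2:ℝ) ^ (1/M) ≤ x) :
    (Real.log (1 / (1 - x ^ (-M)))) ^ p ≤ 2 ^ p * x ^ (-(M * p)) := by
  have hb1 : (1:ℝ) < (2:ℝ) ^ (1/M) := by
    have := Real.rpow_lt_rpow_of_exponent_lt (show (1:ℝ) < 2 by norm_num)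
      (show (0:ℝ) < 1/M by positivity)
    simpa using this
  have hx : 1 < x := lt_of_lt_of_le hb1 hxb
  obtain ⟨hu0, hu1⟩ := aux_range hM hx
  have hble : x ^ (-M) ≤ (1:ℝ)/2 := by
    have h1 : x ^ (-M) ≤ ((2:ℝ) ^ (1/M)) ^ (-M) :=
      Real.rpow_le_rpow_of_nonpos (by positivity) hxb (by linarith)
    have h2 : ((2:ℝ) ^ (1/M)) ^ (-M) = (1:ℝ)/2 := by
      rw [← Real.rpow_mul (by norm_num : (0:ℝ) ≤ 2),
        show (1/M) * (-M) = (-1:ℝ) by field_simp]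
      norm_num
    linarith [h2 ▸ h1]
  set u := x ^ (-M) with hu
  have hv : (0:ℝ) < 1 - u := by linarith
  have hlog : Real.log (1 / (1 - u)) ≤ 2 * u := by
    have h := Real.log_le_sub_one_of_pos (show (0:ℝ) < (1 - u)⁻¹ by positivity)
    rw [one_div]
    have hinv : (1 - u) * (1 - u)⁻¹ = 1 := mul_inv_cancel₀ hv.ne'
    nlinarith [h, hinv, hu0, hble]
  have hlognn : 0 ≤ Real.log (1 / (1 - u)) :=
    Real.log_nonneg ((le_div_iff₀ hv).2 (by linarith))
  calc (Real.log (1 / (1 - u))) ^ p ≤ (2 * u) ^ p := Real.rpow_le_rpow hlognn hlog hp.le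
    _ = 2 ^ p * u ^ p := Real.mul_rpow (by norm_num) hu0.le
    _ = 2 ^ p * x ^ (-(M * p)) := by
        rw [hu, ← Real.rpow_mul (by linarith : (0:ℝ) ≤ x)]
        ring_nf

private lemma aux_bgt {M : ℝ} (hM : 0 < M) : (1:ℝ) < (2:ℝ) ^ (1/M) := by
  have := Real.rpow_lt_rpow_of_exponent_lt (show (1:ℝ) < 2 by norm_num)
    (show (0:ℝ) < 1/M by positivity)
  simpa using this

private lemma aux_cont {p M : ℝ} (hp : 0 < p) (hM : 0 < M) :
    ContinuousOn (fun x : ℝ => (Real.log (1 / (1 - x ^ (-M)))) ^ p) (Set.Ioi 1) := by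
  apply continuousOn_of_forall_continuousAt
  intro x hx
  have hx1 : 1 < x := hx
  obtain ⟨hu0, hu1⟩ := aux_range hM hx1
  have h1 : ContinuousAt (fun x : ℝ => x ^ (-M)) x :=
    Real.continuousAt_rpow_const x (-M) (Or.inl (by positivity))
  have h2 : ContinuousAt (fun x : ℝ => 1 / (1 - x ^ (-M))) x :=
    continuousAt_const.div (continuousAt_const.sub h1) (by intro h; nlinarith)
  have h3 : ContinuousAt (fun x : ℝ => Real.log (1 / (1 - x ^ (-M)))) x :=
    h2.log (by apply ne_of_gt; apply div_pos one_pos; linarith)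
  exact h3.rpow_const (Or.inr hp.le)

private lemma aux_ub_near {p M x : ℝ} (hp : 0 < p) (hM : 0 < M) (hx : 1 < x)
    (hxb : x ≤ (2:ℝ) ^ (1/M)) :
    (Real.log (1 / (1 - x ^ (-M)))) ^ p
      ≤ (2*p)^p * (M / (3 * (2:ℝ)^(1/M))) ^ (-(1/2) : ℝ) * (x - 1) ^ (-(1/2) : ℝ) := by
  have hb0 : (0:ℝ) < (2:ℝ) ^ (1/M) := Real.rpow_pos_of_pos two_pos _
  have h1 := aux_ub_global hp hM hx
  have h2 := aux_near hM hx hxb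
  have hpos : (0:ℝ) < M * (x - 1) / (3 * (2:ℝ)^(1/M)) := by
    apply div_pos (by nlinarith) (by positivity)
  have h3 : (1 - x ^ (-M)) ^ (-(1/2) : ℝ) ≤ (M * (x - 1) / (3 * (2:ℝ)^(1/M))) ^ (-(1/2) : ℝ) :=
    Real.rpow_le_rpow_of_nonpos hpos h2 (by norm_num)
  have h4 : (M * (x - 1) / (3 * (2:ℝ)^(1/M))) ^ (-(1/2) : ℝ)
      = (M / (3 * (2:ℝ)^(1/M))) ^ (-(1/2) : ℝ) * (x - 1) ^ (-(1/2) : ℝ) := by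
    rw [show M * (x - 1) / (3 * (2:ℝ)^(1/M)) = (M / (3 * (2:ℝ)^(1/M))) * (x - 1) by ring,
      Real.mul_rpow (by positivity) (by linarith)]
  have h5 : (0:ℝ) ≤ (2*p)^p := by positivity
  calc (Real.log (1 / (1 - x ^ (-M)))) ^ p ≤ (2*p)^p * (1 - x ^ (-M)) ^ (-(1/2) : ℝ) := h1
    _ ≤ (2*p)^p * ((M / (3 * (2:ℝ)^(1/M))) ^ (-(1/2) : ℝ) * (x - 1) ^ (-(1/2) : ℝ)) := by
        rw [← h4]; exact mul_le_mul_of_nonneg_left h3 h5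
    _ = (2*p)^p * (M / (3 * (2:ℝ)^(1/M))) ^ (-(1/2) : ℝ) * (x - 1) ^ (-(1/2) : ℝ) := by ring

private lemma aux_int_pow {b : ℝ} (hb : 1 ≤ b) :
    IntegrableOn (fun x : ℝ => (x - 1) ^ (-(1/2) : ℝ)) (Ioc 1 b) := by
  have h0 : IntervalIntegrable (fun x : ℝ => x ^ (-(1/2):ℝ)) volume 0 (b-1) :=
    intervalIntegral.intervalIntegrable_rpow' (by norm_num)
  have h1 := h0.comp_sub_right 1
  rw [zero_add, sub_add_cancel] at h1
  exact (intervalIntegrable_iff_integrableOn_Ioc_of_le hb).1 h1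

private lemma aux_nonneg {p M x : ℝ} (hM : 0 < M) (hx : 1 < x) :
    0 ≤ (Real.log (1 / (1 - x ^ (-M)))) ^ p := by
  apply Real.rpow_nonneg
  obtain ⟨hu0, hu1⟩ := aux_range hM hx
  exact Real.log_nonneg ((le_div_iff₀ (by linarith)).2 (by linarith))

private lemma aux_integrable {p M : ℝ} (hp : 0 < p) (hM : 1/p < M) :
    IntegrableOn (fun x : ℝ => (Real.log (1 / (1 - x ^ (-M)))) ^ p) (Set.Ioi 1) := by
  have hM0 : 0 < M := lt_trans (by positivity) hM
  have hb1 : (1:ℝ) < (2:ℝ)^(1/M) := aux_bgt hM0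
  have hMp : 1 < M * p := by
    have := (div_lt_iff₀ hp).1 hM
    linarith
  rw [show Set.Ioi (1:ℝ) = Set.Ioc 1 ((2:ℝ)^(1/M)) ∪ Set.Ioi ((2:ℝ)^(1/M)) from
    (Set.Ioc_union_Ioi_eq_Ioi hb1.le).symm]
  apply MeasureTheory.IntegrableOn.union
  · apply Integrable.mono
      (((aux_int_pow hb1.le).const_mul ((2*p)^p * (M / (3 * (2:ℝ)^(1/M))) ^ (-(1/2) : ℝ))))
      (((aux_cont hp hM0).mono (Set.Ioc_subset_Ioi_self)).aestronglyMeasurable measurableSet_Ioc)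
    filter_upwards [ae_restrict_mem measurableSet_Ioc] with x hx
    rw [Real.norm_eq_abs, Real.norm_eq_abs, abs_of_nonneg (aux_nonneg hM0 hx.1),
      abs_of_nonneg (mul_nonneg (by positivity) (Real.rpow_nonneg (by linarith [hx.1]) _))]
    have := aux_ub_near hp hM0 hx.1 hx.2
    calc (Real.log (1 / (1 - x ^ (-M)))) ^ p
        ≤ (2*p)^p * (M / (3 * (2:ℝ)^(1/M))) ^ (-(1/2) : ℝ) * (x - 1) ^ (-(1/2) : ℝ) := this
      _ = (2*p)^p * (M / (3 * (2:ℝ)^(1/M))) ^ (-(1/2) : ℝ) * ((x - 1) ^ (-(1/2) : ℝ)) := by ring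
  · apply Integrable.mono
      ((integrableOn_Ioi_rpow_of_lt (show -(M*p) < -1 by linarith)
        (show (0:ℝ) < (2:ℝ)^(1/M) by positivity)).const_mul ((2:ℝ)^p))
      (((aux_cont hp hM0).mono (Set.Ioi_subset_Ioi hb1.le)).aestronglyMeasurable measurableSet_Ioi)
    filter_upwards [ae_restrict_mem measurableSet_Ioi] with x hx
    have hx1 : 1 < x := lt_trans hb1 hx
    rw [Real.norm_eq_abs, Real.norm_eq_abs, abs_of_nonneg (aux_nonneg hM0 hx1),
      abs_of_nonneg (by positivity)]
    exact aux_tail hp hM0 (le_of_lt hx)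

private lemma aux_pow_val {c M : ℝ} (hc : 0 < c) (hM : M ≠ 0) : ((c:ℝ)^(1/M))^(-M) = c⁻¹ := by
  rw [← Real.rpow_mul hc.le, show (1/M) * (-M) = (-1:ℝ) by field_simp, Real.rpow_neg_one]

private lemma aux_bm {M : ℝ} (hM : 0 < M) : (2:ℝ)^(1/M) - 1 ≤ (2:ℝ)^(1/M) / M := by
  have hb : (2:ℝ)^(1/M) = Real.exp (Real.log 2 * (1/M)) := Real.rpow_def_of_pos two_pos _
  set t := Real.log 2 * (1/M) with htdef
  have hl2 : (0:ℝ) < Real.log 2 := Real.log_pos (by norm_num)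
  have hl2' : Real.log 2 < 0.6931471808 := Real.log_two_lt_d9
  have ht0 : 0 ≤ t := by positivity
  have ht : t ≤ 1/M := by
    rw [htdef]
    have : Real.log 2 * (1/M) ≤ 1 * (1/M) :=
      mul_le_mul_of_nonneg_right (by linarith) (by positivity)
    linarith
  have hinv : Real.exp (-t) * Real.exp t = 1 := by rw [← Real.exp_add]; simp
  have h3 : Real.exp t - 1 ≤ t * Real.exp t := by
    nlinarith [Real.add_one_le_exp (-t), Real.exp_pos t]
  have h4 : t * Real.exp t ≤ (1/M) * Real.exp t :=
    mul_le_mul_of_nonneg_right ht (Real.exp_pos t).le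
  rw [hb]
  have h5 : (1/M) * Real.exp t = Real.exp t / M := by ring
  linarith

private lemma aux_BA {M : ℝ} (hM : 0 < M) : 1/(2*M) ≤ (4:ℝ)^(1/M) - (2:ℝ)^(1/M) := by
  have h4 : (4:ℝ)^(1/M) = Real.exp (Real.log 4 * (1/M)) := Real.rpow_def_of_pos (by norm_num) _
  have h2 : (2:ℝ)^(1/M) = Real.exp (Real.log 2 * (1/M)) := Real.rpow_def_of_pos two_pos _
  have hlog4 : Real.log 4 = 2 * Real.log 2 := by
    rw [show (4:ℝ) = 2^2 by norm_num, Real.log_pow]; push_cast; ring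
  set t := Real.log 2 * (1/M) with htdef
  have hl2 : (0:ℝ) < Real.log 2 := Real.log_pos (by norm_num)
  have hl2' : (0.6931471803:ℝ) < Real.log 2 := Real.log_two_gt_d9
  have ht0 : 0 ≤ t := by positivity
  have hexp2 : Real.log 4 * (1/M) = t + t := by rw [hlog4, htdef]; ring
  rw [h4, h2, hexp2, Real.exp_add]
  have h5 := Real.add_one_le_exp t
  have h6 : 1 ≤ Real.exp t := Real.one_le_exp ht0
  have htM : 1/(2*M) ≤ t := by
    rw [htdef]
    have : (1/2) * (1/M) ≤ Real.log 2 * (1/M) :=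
      mul_le_mul_of_nonneg_right (by linarith) (by positivity)
    calc 1/(2*M) = (1/2) * (1/M) := by ring
      _ ≤ t := this
  nlinarith [sq_nonneg (Real.exp t - 1)]

private lemma aux_int_val {b : ℝ} (hb : 1 ≤ b) :
    ∫ x in Set.Ioc 1 b, (x - 1) ^ (-(1/2) : ℝ) = 2 * (b - 1) ^ ((1/2) : ℝ) := by
  rw [← intervalIntegral.integral_of_le hb]
  rw [show (fun x : ℝ => (x - 1) ^ (-(1/2) : ℝ)) = (fun x : ℝ => (fun y : ℝ => y ^ (-(1/2) : ℝ)) (x - 1)) from rfl]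
  rw [intervalIntegral.integral_comp_sub_right (fun y : ℝ => y ^ (-(1/2) : ℝ)) 1]
  rw [integral_rpow (Or.inl (by norm_num))]
  norm_num
  ring

private lemma aux_common {p M : ℝ} (hp : 0 < p) (hM2 : 2/p ≤ M) :
    0 < M ∧ 2 ≤ M * p ∧ 1/p < M := by
  have hM0 : 0 < M := lt_of_lt_of_le (by positivity) hM2
  have h2 : 2 ≤ M * p := by
    have := (div_le_iff₀ hp).1 hM2
    linarith
  refine ⟨hM0, h2, ?_⟩
  rw [div_lt_iff₀ hp]
  nlinarith

private lemma aux_lower {p M : ℝ} (hp : 0 < p) (hM2 : 2/p ≤ M) :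
    (Real.log (4/3:ℝ))^p / 2 / M
      ≤ ∫ x in Set.Ioi (1:ℝ), (Real.log (1 / (1 - x ^ (-M)))) ^ p := by
  obtain ⟨hM0, hMp2, hM1p⟩ := aux_common hp hM2
  have hint := aux_integrable hp hM1p
  set b := (2:ℝ)^(1/M) with hbdef
  set B := (4:ℝ)^(1/M) with hBdef
  have hb1 : 1 < b := aux_bgt hM0
  have hbB : b ≤ B := Real.rpow_le_rpow (by norm_num) (by norm_num) (by positivity)
  have hBA : 1/(2*M) ≤ B - b := aux_BA hM0
  have hsub : Set.Ioc b B ⊆ Set.Ioi (1:ℝ) := fun x hx => lt_trans hb1 hx.1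
  have hbval : b ^ (-M) = (1:ℝ)/2 := by
    rw [hbdef, aux_pow_val two_pos hM0.ne']; norm_num
  have hBval : B ^ (-M) = (1:ℝ)/4 := by
    rw [hBdef, aux_pow_val (by norm_num) hM0.ne']; norm_num
  have hlog43 : (0:ℝ) < Real.log (4/3) := Real.log_pos (by norm_num)
  have hige : ∀ x ∈ Set.Ioc b B, (Real.log (4/3:ℝ))^p ≤ (Real.log (1 / (1 - x ^ (-M))))^p := by
    intro x hx
    have hx1 : 1 < x := hsub hx
    have hxA : x ^ (-M) ≤ 1/2 := by
      have := Real.rpow_le_rpow_of_nonpos (by positivity : (0:ℝ) < b) hx.1.le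
        (by linarith : -M ≤ 0)
      rw [hbval] at this; exact this
    have hxB : (1:ℝ)/4 ≤ x ^ (-M) := by
      have := Real.rpow_le_rpow_of_nonpos (by linarith : (0:ℝ) < x) hx.2
        (by linarith : -M ≤ 0)
      rw [hBval] at this; exact this
    have hv : (0:ℝ) < 1 - x ^ (-M) := by linarith
    have h43 : (4/3:ℝ) ≤ 1 / (1 - x ^ (-M)) := by
      rw [le_div_iff₀ hv]; linarith
    exact Real.rpow_le_rpow hlog43.le (Real.log_le_log (by norm_num) h43) hp.le
  have h1 : (Real.log (4/3:ℝ))^p * (volume (Set.Ioc b B)).toReal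
      ≤ ∫ x in Set.Ioc b B, (Real.log (1 / (1 - x ^ (-M))))^p := by
    have := setIntegral_ge_of_const_le measurableSet_Ioc measure_Ioc_lt_top.ne hige
      (hint.mono_set hsub)
    rw [smul_eq_mul, mul_comm] at this; exact this
  have hvol : (volume (Set.Ioc b B)).toReal = B - b := by
    rw [Real.volume_Ioc, ENNReal.toReal_ofReal (by linarith)]
  have h2 : ∫ x in Set.Ioc b B, (Real.log (1 / (1 - x ^ (-M))))^p
      ≤ ∫ x in Set.Ioi (1:ℝ), (Real.log (1 / (1 - x ^ (-M))))^p := by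
    apply setIntegral_mono_set hint
    · filter_upwards [ae_restrict_mem measurableSet_Ioi] with x hx
      exact aux_nonneg hM0 hx
    · exact HasSubset.Subset.eventuallyLE hsub
  have h3 : (Real.log (4/3:ℝ))^p / 2 / M ≤ (Real.log (4/3:ℝ))^p * (B - b) := by
    have hc : (0:ℝ) < (Real.log (4/3:ℝ))^p := Real.rpow_pos_of_pos hlog43 p
    calc (Real.log (4/3:ℝ))^p / 2 / M = (Real.log (4/3:ℝ))^p * (1/(2*M)) := by ring
      _ ≤ (Real.log (4/3:ℝ))^p * (B - b) := mul_le_mul_of_nonneg_left hBA hc.le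
  rw [hvol] at h1
  linarith

private lemma aux_upper_near {p M : ℝ} (hp : 0 < p) (hM2 : 2/p ≤ M) :
    ∫ x in Set.Ioc (1:ℝ) ((2:ℝ)^(1/M)), (Real.log (1 / (1 - x ^ (-M)))) ^ p
      ≤ 6 * (2*p)^p * (2:ℝ)^(p/2) / M := by
  obtain ⟨hM0, hMp2, hM1p⟩ := aux_common hp hM2
  have hint := aux_integrable hp hM1p
  set b := (2:ℝ)^(1/M) with hbdef
  set D := (2:ℝ)^(p/2) with hDdef
  have hb1 : 1 < b := aux_bgt hM0
  have hD1 : (1:ℝ) ≤ D := Real.one_le_rpow one_le_two (by positivity)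
  have hbD : b ≤ D := by
    apply Real.rpow_le_rpow_of_exponent_le one_le_two
    rw [div_le_div_iff₀ hM0 two_pos]
    nlinarith
  have hbm : b - 1 ≤ b / M := aux_bm hM0
  set K := (2*p)^p * (M / (3 * b)) ^ (-(1/2) : ℝ) with hKdef
  have hsub : Set.Ioc (1:ℝ) b ⊆ Set.Ioi (1:ℝ) := Set.Ioc_subset_Ioi_self
  have h1 : ∫ x in Set.Ioc (1:ℝ) b, (Real.log (1 / (1 - x ^ (-M)))) ^ p
      ≤ ∫ x in Set.Ioc (1:ℝ) b, K * (x - 1) ^ (-(1/2) : ℝ) := by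
    apply setIntegral_mono_on (hint.mono_set hsub)
      ((aux_int_pow hb1.le).const_mul K) measurableSet_Ioc
    intro x hx
    exact aux_ub_near hp hM0 hx.1 hx.2
  have h2 : ∫ x in Set.Ioc (1:ℝ) b, K * (x - 1) ^ (-(1/2) : ℝ)
      = K * (2 * (b - 1) ^ ((1/2) : ℝ)) := by
    rw [MeasureTheory.integral_const_mul, aux_int_val hb1.le]
  -- now the arithmetic bound: K * (2 * (b-1)^(1/2)) ≤ 6*(2p)^p*D/M
  have hs : (0:ℝ) < M / (3 * b) := by positivity
  have hMb : (b - 1) * M ≤ b := (le_div_iff₀ hM0).1 hbm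
  have key : (M / (3*b)) ^ (-(1/2) : ℝ) * (2 * (b - 1) ^ ((1/2) : ℝ)) ≤ 6 * D / M := by
    have e1 : (M / (3*b)) ^ (-(1/2) : ℝ) = (Real.sqrt (M / (3*b)))⁻¹ := by
      rw [Real.rpow_neg hs.le, Real.sqrt_eq_rpow]
    have e2 : (b - 1) ^ ((1/2) : ℝ) = Real.sqrt (b - 1) := (Real.sqrt_eq_rpow _).symm
    rw [e1, e2]
    have hsq : (0:ℝ) < Real.sqrt (M / (3*b)) := Real.sqrt_pos.2 hs
    have e3 : (Real.sqrt (M / (3*b)))⁻¹ * (2 * Real.sqrt (b - 1))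
        = 2 * Real.sqrt ((b - 1) / (M / (3*b))) := by
      rw [Real.sqrt_div (by linarith : (0:ℝ) ≤ b - 1)]
      field_simp
    rw [e3]
    have hineq : (b - 1) / (M / (3*b)) ≤ (3 * D / M)^2 := by
      rw [div_div_eq_mul_div, div_pow, div_le_div_iff₀ hM0 (by positivity)]
      nlinarith [mul_le_mul_of_nonneg_left hMb (by positivity : (0:ℝ) ≤ 3*b*M),
        mul_le_mul_of_nonneg_left
          (mul_le_mul hbD hbD (by linarith) (by linarith)) (by positivity : (0:ℝ) ≤ 3*M)]
    calc 2 * Real.sqrt ((b - 1) / (M / (3*b))) ≤ 2 * Real.sqrt ((3 * D / M)^2) := by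
          have := Real.sqrt_le_sqrt hineq
          linarith
      _ = 2 * (3 * D / M) := by rw [Real.sqrt_sq (by positivity)]
      _ = 6 * D / M := by ring
  have h3 : K * (2 * (b - 1) ^ ((1/2) : ℝ)) ≤ (2*p)^p * (6 * D / M) := by
    rw [hKdef, mul_assoc]
    exact mul_le_mul_of_nonneg_left key (by positivity)
  calc ∫ x in Set.Ioc (1:ℝ) b, (Real.log (1 / (1 - x ^ (-M)))) ^ p
      ≤ K * (2 * (b - 1) ^ ((1/2) : ℝ)) := h2 ▸ h1
    _ ≤ (2*p)^p * (6 * D / M) := h3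
    _ = 6 * (2*p)^p * D / M := by ring

private lemma aux_upper_tail {p M : ℝ} (hp : 0 < p) (hM2 : 2/p ≤ M) :
    ∫ x in Set.Ioi ((2:ℝ)^(1/M)), (Real.log (1 / (1 - x ^ (-M)))) ^ p
      ≤ (2:ℝ)^(p+1) / p / M := by
  obtain ⟨hM0, hMp2, hM1p⟩ := aux_common hp hM2
  have hint := aux_integrable hp hM1p
  set b := (2:ℝ)^(1/M) with hbdef
  have hb1 : 1 < b := aux_bgt hM0
  have hb0 : (0:ℝ) < b := by linarith
  have hsub : Set.Ioi b ⊆ Set.Ioi (1:ℝ) := Set.Ioi_subset_Ioi hb1.le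
  have hlt : -(M*p) < -1 := by linarith
  have h1 : ∫ x in Set.Ioi b, (Real.log (1 / (1 - x ^ (-M)))) ^ p
      ≤ ∫ x in Set.Ioi b, (2:ℝ)^p * x ^ (-(M*p)) := by
    apply setIntegral_mono_on (hint.mono_set hsub)
      ((integrableOn_Ioi_rpow_of_lt hlt hb0).const_mul ((2:ℝ)^p)) measurableSet_Ioi
    intro x hx
    exact aux_tail hp hM0 (le_of_lt hx)
  have h2 : ∫ x in Set.Ioi b, (2:ℝ)^p * x ^ (-(M*p))
      = (2:ℝ)^p * (-b ^ (-(M*p) + 1) / (-(M*p) + 1)) := by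
    rw [MeasureTheory.integral_const_mul, integral_Ioi_rpow_of_lt hlt hb0]
  have hble : b ^ (-(M*p) + 1) ≤ 1 :=
    Real.rpow_le_one_of_one_le_of_nonpos hb1.le (by linarith)
  have hbpos : (0:ℝ) < b ^ (-(M*p) + 1) := Real.rpow_pos_of_pos hb0 _
  have h3 : -b ^ (-(M*p) + 1) / (-(M*p) + 1) ≤ 2 / (M*p) := by
    rw [show -b ^ (-(M*p) + 1) / (-(M*p) + 1) = b ^ (-(M*p) + 1) / (M*p - 1) by
      rw [div_eq_div_iff (by linarith) (by linarith)]; ring]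
    rw [div_le_div_iff₀ (by linarith) (by positivity)]
    nlinarith
  have h4 : (2:ℝ)^p * (2 / (M*p)) = (2:ℝ)^(p+1) / p / M := by
    rw [Real.rpow_add two_pos, Real.rpow_one]
    field_simp
  calc ∫ x in Set.Ioi b, (Real.log (1 / (1 - x ^ (-M)))) ^ p
      ≤ (2:ℝ)^p * (-b ^ (-(M*p) + 1) / (-(M*p) + 1)) := h2 ▸ h1
    _ ≤ (2:ℝ)^p * (2 / (M*p)) := mul_le_mul_of_nonneg_left h3 (by positivity)
    _ = (2:ℝ)^(p+1) / p / M := h4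

theorem integral_log_one_div_one_sub_rpow_asymp (p : ℝ) (hp : 0 < p) :
    (∀ M : ℝ, 1 / p < M →
      IntegrableOn (fun x : ℝ => (Real.log (1 / (1 - x ^ (-M)))) ^ p) (Set.Ioi 1)) ∧
    ∃ c C : ℝ, 0 < c ∧ 0 < C ∧
      ∀ M : ℝ, 2 / p ≤ M →
        c / M ≤ (∫ x in Set.Ioi (1 : ℝ), (Real.log (1 / (1 - x ^ (-M)))) ^ p) ∧
        (∫ x in Set.Ioi (1 : ℝ), (Real.log (1 / (1 - x ^ (-M)))) ^ p) ≤ C / M := by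
  constructor
  · intro M hM
    exact aux_integrable hp hM
  · refine ⟨(Real.log (4/3:ℝ))^p / 2, 6*(2*p)^p*(2:ℝ)^(p/2) + (2:ℝ)^(p+1)/p, ?_, ?_, ?_⟩
    · have := Real.log_pos (show (1:ℝ) < 4/3 by norm_num)
      positivity
    · positivity
    · intro M hM2
      obtain ⟨hM0, hMp2, hM1p⟩ := aux_common hp hM2
      have hint := aux_integrable hp hM1p
      have hb1 : (1:ℝ) < (2:ℝ)^(1/M) := aux_bgt hM0
      refine ⟨aux_lower hp hM2, ?_⟩
      have hsplit : (∫ x in Set.Ioi (1:ℝ), (Real.log (1 / (1 - x ^ (-M)))) ^ p)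
          = (∫ x in Set.Ioc (1:ℝ) ((2:ℝ)^(1/M)), (Real.log (1 / (1 - x ^ (-M)))) ^ p)
            + ∫ x in Set.Ioi ((2:ℝ)^(1/M)), (Real.log (1 / (1 - x ^ (-M)))) ^ p := by
        rw [← MeasureTheory.setIntegral_union Set.Ioc_disjoint_Ioi_same measurableSet_Ioi
          (hint.mono_set Set.Ioc_subset_Ioi_self)
          (hint.mono_set (Set.Ioi_subset_Ioi hb1.le)),
          Set.Ioc_union_Ioi_eq_Ioi hb1.le]
      rw [hsplit,
        show (6*(2*p)^p*(2:ℝ)^(p/2) + (2:ℝ)^(p+1)/p)/M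
          = 6*(2*p)^p*(2:ℝ)^(p/2)/M + (2:ℝ)^(p+1)/p/M by ring]
      exact add_le_add (aux_upper_near hp hM2) (aux_upper_tail hp hM2)
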